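/- arXiv:2308.14028 — 6 statements merged into one kernel-verified Lean document; each statement's English description precedes it below -/
import Mathlib

section
/- Let n ≥ a + b and let A ⊆ ([n] choose a), B ⊆ ([n] choose b) be cross-intersecting families (every member of A intersects every member of B). Then |A|/C(n,a) + |B|/C(n,b) ≤ 1. -/
open Finset

private lemma choose_identity {n a b : ℕ} (hn : a + b ≤ n) :
    n.choose a * (n - a).choose b = n.choose b * (n - b).choose a := by
  have ha : a ≤ n := by omega
  have hb : b ≤ n := by omega
  have hba : b ≤ n - a := by omega
  have hab : a ≤ n - b := by omega
  have h1 : n - a - b = n - (a + b) := by omega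
  have h2 : n - b - a = n - (a + b) := by omega
  apply Nat.eq_of_mul_eq_mul_right
    (show 0 < a.factorial * (b.factorial * (n - (a + b)).factorial) by positivity)
  have A1 := Nat.choose_mul_factorial_mul_factorial ha
  have A2 := Nat.choose_mul_factorial_mul_factorial hba
  have B1 := Nat.choose_mul_factorial_mul_factorial hb
  have B2 := Nat.choose_mul_factorial_mul_factorial hab
  rw [h1] at A2; rw [h2] at B2
  calc n.choose a * (n - a).choose b * (a.factorial * (b.factorial * (n - (a + b)).factorial))
      = ((n - a).choose b * b.factorial * (n - (a + b)).factorial) *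
          (n.choose a * a.factorial) := by ring
    _ = (n - a).factorial * (n.choose a * a.factorial) := by rw [A2]
    _ = n.choose a * a.factorial * (n - a).factorial := by ring
    _ = n.factorial := A1
    _ = n.choose b * b.factorial * (n - b).factorial := B1.symm
    _ = ((n - b).choose a * a.factorial * (n - (a + b)).factorial) *
          (n.choose b * b.factorial) := by rw [B2]; ring
    _ = n.choose b * (n - b).choose a *
          (a.factorial * (b.factorial * (n - (a + b)).factorial)) := by ring

private lemma card_disj_pairs {n c d : ℕ} (h : c + d ≤ n) (W : Finset (Finset ℕ))
    (hW : W ⊆ Finset.powersetCard c (Finset.Icc 1 n)) :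
    ((W ×ˢ Finset.powersetCard d (Finset.Icc 1 n)).filter
      fun p => Disjoint p.1 p.2).card = W.card * (n - c).choose d := by
  classical
  rw [Finset.card_eq_sum_card_fiberwise
    (f := Prod.fst) (t := W) (fun p hp => (Finset.mem_product.1 (Finset.mem_filter.1 hp).1).1)]
  have hfib : ∀ S ∈ W,
      (((W ×ˢ Finset.powersetCard d (Finset.Icc 1 n)).filter
        fun p => Disjoint p.1 p.2).filter fun p => p.1 = S).card = (n - c).choose d := by
    intro S hS
    obtain ⟨hSsub, hScard⟩ := Finset.mem_powersetCard.1 (hW hS)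
    have hcard : (Finset.Icc 1 n \ S).card = n - c := by
      rw [Finset.card_sdiff_of_subset hSsub, Nat.card_Icc, hScard]; omega
    have heq : (((W ×ˢ Finset.powersetCard d (Finset.Icc 1 n)).filter
        fun p => Disjoint p.1 p.2).filter fun p => p.1 = S)
        = {S} ×ˢ Finset.powersetCard d (Finset.Icc 1 n \ S) := by
      ext ⟨T, U⟩
      simp only [Finset.mem_filter, Finset.mem_product, Finset.mem_powersetCard,
        Finset.subset_sdiff, Finset.mem_singleton]
      constructor
      · rintro ⟨⟨⟨-, hU, hUc⟩, hd⟩, rfl⟩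
        exact ⟨rfl, ⟨hU, hd.symm⟩, hUc⟩
      · rintro ⟨rfl, ⟨hU, hd⟩, hUc⟩
        exact ⟨⟨⟨hS, hU, hUc⟩, hd.symm⟩, rfl⟩
    rw [heq, Finset.card_product, Finset.card_singleton, Finset.card_powersetCard, hcard,
      one_mul]
  rw [Finset.sum_congr rfl hfib, Finset.sum_const, smul_eq_mul]

theorem stmt_1 (n a b : ℕ) (hn : a + b ≤ n) (ha : 0 < a) (hb : 0 < b)
    (A B : Finset (Finset ℕ))
    (hA : A ⊆ Finset.powersetCard a (Finset.Icc 1 n))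
    (hB : B ⊆ Finset.powersetCard b (Finset.Icc 1 n))
    (hcross : ∀ S ∈ A, ∀ T ∈ B, (S ∩ T).Nonempty) :
    (A.card : ℝ) / (n.choose a) + (B.card : ℝ) / (n.choose b) ≤ 1 := by
  classical
  set X := Finset.powersetCard a (Finset.Icc 1 n) with hX
  set Y := Finset.powersetCard b (Finset.Icc 1 n) with hY
  have hXcard : X.card = n.choose a := by
    rw [hX, Finset.card_powersetCard, Nat.card_Icc, Nat.add_sub_cancel]
  -- the big set of disjoint pairs
  set F := (X ×ˢ Y).filter (fun p => Disjoint p.1 p.2) with hF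
  set FA := F.filter (fun p => p.1 ∈ A) with hFA
  set FB := F.filter (fun p => p.2 ∈ B) with hFB
  have hdisj : Disjoint FA FB := by
    rw [Finset.disjoint_left]
    rintro ⟨S, T⟩ hpA hpB
    have h1 := Finset.mem_filter.1 hpA
    have h2 := Finset.mem_filter.1 hpB
    have hd : Disjoint S T := (Finset.mem_filter.1 h1.1).2
    obtain ⟨x, hx⟩ := hcross S h1.2 T h2.2
    exact Finset.disjoint_left.1 hd (Finset.mem_inter.1 hx).1 (Finset.mem_inter.1 hx).2
  have hsum : FA.card + FB.card ≤ F.card := by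
    rw [← Finset.card_union_of_disjoint hdisj]
    exact Finset.card_le_card (Finset.union_subset (Finset.filter_subset _ _)
      (Finset.filter_subset _ _))
  have hFcard : F.card = n.choose a * (n - a).choose b := by
    rw [hF, card_disj_pairs hn X (le_refl _), hXcard]
  have hFAcard : FA.card = A.card * (n - a).choose b := by
    rw [← card_disj_pairs hn A hA]
    congr 1
    ext ⟨S, T⟩
    simp only [hFA, hF, Finset.mem_filter, Finset.mem_product]
    constructor
    · rintro ⟨⟨⟨-, hT⟩, hd⟩, hS⟩; exact ⟨⟨hS, hT⟩, hd⟩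
    · rintro ⟨⟨hS, hT⟩, hd⟩; exact ⟨⟨⟨hA hS, hT⟩, hd⟩, hS⟩
  have hFBcard : FB.card = B.card * (n - b).choose a := by
    have hswap : FB.card = ((B ×ˢ X).filter fun p => Disjoint p.1 p.2).card := by
      apply Finset.card_bij (fun p _ => p.swap)
      · rintro ⟨S, T⟩ hp
        simp only [hFB, hF, Finset.mem_filter, Finset.mem_product] at hp
        simp only [Finset.mem_filter, Finset.mem_product, Prod.swap]
        exact ⟨⟨hp.2, hp.1.1.1⟩, hp.1.2.symm⟩
      · rintro ⟨S, T⟩ - ⟨S', T'⟩ - h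
        simpa [Prod.ext_iff, and_comm] using h
      · rintro ⟨T, S⟩ hp
        simp only [Finset.mem_filter, Finset.mem_product] at hp
        refine ⟨(S, T), ?_, rfl⟩
        simp only [hFB, hF, Finset.mem_filter, Finset.mem_product]
        exact ⟨⟨⟨hp.1.2, hB hp.1.1⟩, hp.2.symm⟩, hp.1.1⟩
    rw [hswap, card_disj_pairs (show b + a ≤ n by omega) B hB]
  have key : A.card * (n - a).choose b + B.card * (n - b).choose a
      ≤ n.choose a * (n - a).choose b := by
    rw [← hFAcard, ← hFBcard, ← hFcard]; exact hsum
  have id1 : n.choose a * (n - a).choose b = n.choose b * (n - b).choose a :=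
    choose_identity hn
  have hcA : 0 < n.choose a := Nat.choose_pos (by omega)
  have hcB : 0 < n.choose b := Nat.choose_pos (by omega)
  have hkA : 0 < (n - a).choose b := Nat.choose_pos (by omega)
  have hkB : 0 < (n - b).choose a := Nat.choose_pos (by omega)
  have keyR : (A.card : ℝ) * (n - a).choose b + B.card * (n - b).choose a
      ≤ (n.choose a : ℝ) * (n - a).choose b := by exact_mod_cast key
  have idR : (n.choose a : ℝ) * (n - a).choose b = (n.choose b : ℝ) * (n - b).choose a := by
    exact_mod_cast id1
  have hcA' : (0:ℝ) < n.choose a := by exact_mod_cast hcA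
  have hcB' : (0:ℝ) < n.choose b := by exact_mod_cast hcB
  have hkA' : (0:ℝ) < (n - a).choose b := by exact_mod_cast hkA
  have hkB' : (0:ℝ) < (n - b).choose a := by exact_mod_cast hkB
  rw [div_add_div _ _ (ne_of_gt hcA') (ne_of_gt hcB'), div_le_one (by positivity)]
  nlinarith [keyR, idR, hkA', hcA', hcB']
end

section
/- Let A ⊆ ([n] choose a) and B ⊆ ([n] choose b) be cross-intersecting families with n ≥ a + b, and let d be a positive integer with d < b. If |A| ≥ C(n-1,a-1) + C(n-2,a-1) + ... + C(n-d,a-1), then |B| ≤ C(n-d, b-d). -/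
set_option maxHeartbeats 1000000


open Finset

attribute [-instance] instDecidableEqFin

open scoped FinsetFamily

private lemma sum_choose_aux (a : ℕ) : ∀ d n : ℕ, d ≤ n →
    ∑ i ∈ Finset.Icc 1 d, (n - i).choose a + (n - d).choose (a + 1) = n.choose (a + 1) := by
  intro d
  induction d with
  | zero => intro n _; simp
  | succ d ih =>
    intro n hdn
    rw [Finset.sum_Icc_succ_top (by omega)]
    have h1 : n - d = (n - (d + 1)) + 1 := by omega
    have h2 := ih n (by omega)
    rw [h1, Nat.choose_succ_succ'] at h2
    omega

theorem stmt_2 (n a b d : ℕ) (hn : a + b ≤ n) (hd : 0 < d) (hdb : d < b)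
    (A B : Finset (Finset ℕ))
    (hA : A ⊆ Finset.powersetCard a (Finset.Icc 1 n))
    (hB : B ⊆ Finset.powersetCard b (Finset.Icc 1 n))
    (hcross : ∀ S ∈ A, ∀ T ∈ B, (S ∩ T).Nonempty)
    (hcard : ∑ i ∈ Finset.Icc 1 d, (n - i).choose (a - 1) ≤ A.card) :
    B.card ≤ (n - d).choose (b - d) := by
  by_cases ha0 : a = 0
  · -- A consists of the empty set; then B must be empty.
    subst ha0
    have hsum : ∑ i ∈ Finset.Icc 1 d, (n - i).choose (0 - 1) = d := by
      simp
    have hAne : A.Nonempty := Finset.card_pos.1 (by omega)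
    obtain ⟨S, hS⟩ := hAne
    have hSe : S = ∅ := by
      have := Finset.mem_powersetCard.1 (hA hS)
      exact Finset.card_eq_zero.1 this.2
    have hBe : B = ∅ := by
      ext T
      simp only [Finset.notMem_empty, iff_false]
      intro hT
      have := hcross S hS T hT
      rw [hSe] at this
      simp at this
    simp [hBe]
  have ha1 : 1 ≤ a := by omega
  have hban : a ≤ n - b := by omega
  have hn1 : 1 ≤ n := by omega
  haveI : NeZero n := ⟨by omega⟩
  by_contra hcon
  push_neg at hcon
  -- transfer everything to `Fin n`
  set pull : Finset ℕ → Finset (Fin n) :=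
    fun S => Finset.univ.filter (fun i : Fin n => (i : ℕ) + 1 ∈ S) with hpull
  have hmap : ∀ S : Finset ℕ, S ⊆ Finset.Icc 1 n → ∀ x : ℕ,
      (x ∈ S ↔ ∃ i : Fin n, i ∈ pull S ∧ (i : ℕ) + 1 = x) := by
    intro S hS x
    constructor
    · intro hx
      have hx' := Finset.mem_Icc.1 (hS hx)
      refine ⟨⟨x - 1, by omega⟩, ?_, by simp; omega⟩
      simp only [hpull, Finset.mem_filter, Finset.mem_univ, true_and]
      have : x - 1 + 1 = x := by omega
      simpa [this] using hx
    · rintro ⟨i, hi, rfl⟩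
      simpa [hpull] using hi
  have hcardpull : ∀ S : Finset ℕ, S ⊆ Finset.Icc 1 n → (pull S).card = S.card := by
    intro S hS
    rw [← Finset.card_image_of_injective (pull S)
      (f := fun i : Fin n => (i : ℕ) + 1) (fun i j h => by
        simp only [add_left_inj, Fin.val_inj] at h; exact h)]
    congr 1
    ext x
    simp only [Finset.mem_image]
    exact (hmap S hS x).symm
  have hinj : Set.InjOn pull {S : Finset ℕ | S ⊆ Finset.Icc 1 n} := by
    intro S hS S' hS' h
    ext x
    rw [hmap S hS x, hmap S' hS' x, h]
  set Af : Finset (Finset (Fin n)) := A.image pull with hAf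
  set Bf : Finset (Finset (Fin n)) := B.image pull with hBf
  have hAsub : ∀ S ∈ A, S ⊆ Finset.Icc 1 n := fun S hS => (Finset.mem_powersetCard.1 (hA hS)).1
  have hBsub : ∀ T ∈ B, T ⊆ Finset.Icc 1 n := fun T hT => (Finset.mem_powersetCard.1 (hB hT)).1
  have hcardAf : Af.card = A.card :=
    Finset.card_image_of_injOn (fun S hS S' hS' h => hinj (hAsub S hS) (hAsub S' hS') h)
  have hcardBf : Bf.card = B.card :=
    Finset.card_image_of_injOn (fun T hT T' hT' h => hinj (hBsub T hT) (hBsub T' hT') h)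
  have hAfsized : ∀ s ∈ Af, s.card = a := by
    rintro s hs
    obtain ⟨S, hS, rfl⟩ := Finset.mem_image.1 hs
    rw [hcardpull S (hAsub S hS)]
    exact (Finset.mem_powersetCard.1 (hA hS)).2
  have hBfsized : ∀ t ∈ Bf, t.card = b := by
    rintro t ht
    obtain ⟨T, hT, rfl⟩ := Finset.mem_image.1 ht
    rw [hcardpull T (hBsub T hT)]
    exact (Finset.mem_powersetCard.1 (hB hT)).2
  set Bc : Finset (Finset (Fin n)) := Bf.image (fun t => tᶜ) with hBc
  have hcardBc : Bc.card = B.card := by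
    rw [hBc, Finset.card_image_of_injective _ compl_injective, hcardBf]
  have hBcsized : (Bc : Set (Finset (Fin n))).Sized (n - b) := by
    rintro t ht
    rw [hBc, Finset.coe_image] at ht
    obtain ⟨t', ht', rfl⟩ := ht
    rw [Finset.card_compl, Fintype.card_fin, hBfsized t' ht']
  set j : ℕ := n - b - a with hj
  -- A and the iterated shadow of Bc are disjoint
  have hdisj : Disjoint Af (∂^[j] Bc) := by
    rw [Finset.disjoint_left]
    intro s hsA hs
    rw [Finset.mem_shadow_iterate_iff_exists_sdiff] at hs
    obtain ⟨c, hc, hsc, -⟩ := hs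
    obtain ⟨t, ht, rfl⟩ := Finset.mem_image.1 hc
    obtain ⟨T, hT, rfl⟩ := Finset.mem_image.1 ht
    obtain ⟨S, hS, rfl⟩ := Finset.mem_image.1 hsA
    obtain ⟨x, hx⟩ := hcross S hS T hT
    have hxS : x ∈ S := (Finset.mem_inter.1 hx).1
    have hxT : x ∈ T := (Finset.mem_inter.1 hx).2
    have hx' := Finset.mem_Icc.1 (hAsub S hS hxS)
    set i : Fin n := ⟨x - 1, by omega⟩ with hi
    have hix : (i : ℕ) + 1 = x := by simp [hi]; omega
    have hiS : i ∈ pull S := by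
      simp only [hpull, Finset.mem_filter, Finset.mem_univ, true_and, hix]
      exact hxS
    have hiT : i ∈ pull T := by
      simp only [hpull, Finset.mem_filter, Finset.mem_univ, true_and, hix]
      exact hxT
    have := hsc hiS
    rw [Finset.mem_compl] at this
    exact this hiT
  -- card bound from disjointness
  have hshadow_sized : ∀ s ∈ ∂^[j] Bc, s.card = a := by
    intro s hs
    have := hBcsized.shadow_iterate (k := j) (by exact_mod_cast hs)
    rw [this]
    omega
  have hsubpow : Af ∪ ∂^[j] Bc ⊆ Finset.powersetCard a (Finset.univ : Finset (Fin n)) := by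
    intro s hs
    rw [Finset.mem_powersetCard]
    rcases Finset.mem_union.1 hs with h | h
    · exact ⟨Finset.subset_univ _, hAfsized s h⟩
    · exact ⟨Finset.subset_univ _, hshadow_sized s h⟩
  have hcardbound : Af.card + (∂^[j] Bc).card ≤ n.choose a := by
    rw [← Finset.card_union_of_disjoint hdisj]
    calc (Af ∪ ∂^[j] Bc).card ≤ (Finset.powersetCard a (Finset.univ : Finset (Fin n))).card :=
          Finset.card_le_card hsubpow
      _ = n.choose a := by rw [Finset.card_powersetCard, Finset.card_univ, Fintype.card_fin]
  -- arithmetic: the iterated shadow of Bc is small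
  obtain ⟨a', rfl⟩ : ∃ a', a = a' + 1 := ⟨a - 1, by omega⟩
  have hid := sum_choose_aux a' d n (by omega)
  have hcard' : ∑ i ∈ Finset.Icc 1 d, (n - i).choose a' ≤ A.card := by
    simpa using hcard
  have hshsmall : (∂^[j] Bc).card ≤ (n - d).choose (a' + 1) := by omega
  -- now the Kruskal-Katona side
  set m : Fin n := ⟨n - d, by omega⟩ with hm
  set q : Fin n := ⟨n - b - 1, by omega⟩ with hq
  set m' : Fin n := ⟨a', by omega⟩ with hm'
  have hqm : q < m := by rw [Fin.lt_def]; simp [hq, hm]; omega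
  have hm'q : (m' : ℕ) ≤ (q : ℕ) := by simp [hq, hm']; omega
  have hcardF : (Finset.Iio m).card = n - d := by rw [Fin.card_Iio]
  have hmq : m ∉ Finset.Iio q := by simp [Finset.mem_Iio]; exact le_of_lt hqm
  have hXcard : (insert m (Finset.Iio q)).card = n - b := by
    rw [Finset.card_insert_of_notMem hmq, Fin.card_Iio]
    simp [hq]; omega
  have hIioqF : Finset.Iio q ⊆ (Finset.Iio m) := by
    intro x hx
    rw [Finset.mem_Iio] at hx ⊢
    exact lt_trans hx hqm
  have hmF : m ∉ (Finset.Iio m) := by simp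
  -- characterization of the initial segment
  have hchar : Colex.initSeg (insert m (Finset.Iio q)) = insert (insert m (Finset.Iio q)) (Finset.powersetCard (n - b) (Finset.Iio m)) := by
    ext t
    rw [Colex.mem_initSeg, Finset.mem_insert, Finset.mem_powersetCard]
    constructor
    · rintro ⟨hcardt, hle⟩
      by_cases htX : t = (insert m (Finset.Iio q))
      · exact Or.inl htX
      right
      have hlt : toColex t < toColex (insert m (Finset.Iio q)) :=
        lt_of_le_of_ne hle (fun h => htX (toColex_inj.1 h))
      obtain ⟨c, hcX, hct, hforall⟩ := Finset.Colex.toColex_lt_toColex_iff_exists_forall_lt.1 hlt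
      refine ⟨?_, by omega⟩
      intro x hxt
      rw [Finset.mem_Iio]
      by_cases hxX : x ∈ (insert m (Finset.Iio q))
      · rcases Finset.mem_insert.1 hxX with rfl | hxq
        · -- x = m ∈ t : derive t = (insert m (Finset.Iio q)), contradiction
          exfalso
          apply htX
          apply Finset.eq_of_subset_of_card_le _ (le_of_eq hcardt)
          intro y hyt
          by_contra hyX
          have hyc := hforall y hyt hyX
          have hcm : c ≠ m := fun h => hct (h ▸ hxt)
          have hcq : c ∈ Finset.Iio q := by
            rcases Finset.mem_insert.1 hcX with h | h
            · exact absurd h hcm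
            · exact h
          exact hyX (Finset.mem_insert_of_mem (Finset.mem_Iio.2
            (lt_trans hyc (Finset.mem_Iio.1 hcq))))
        · exact lt_trans (Finset.mem_Iio.1 hxq) hqm
      · have hxc := hforall x hxt hxX
        rcases Finset.mem_insert.1 hcX with rfl | hcq
        · exact hxc
        · exact lt_trans hxc (lt_trans (Finset.mem_Iio.1 hcq) hqm)
    · rintro (rfl | ⟨htF, htcard⟩)
      · exact ⟨rfl, le_refl _⟩
      refine ⟨by omega, ?_⟩
      rw [Finset.Colex.toColex_le_toColex]
      intro x hxt hxX
      refine ⟨m, Finset.mem_insert_self _ _, fun hmt => hmF (htF hmt), ?_⟩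
      exact le_of_lt (Finset.mem_Iio.1 (htF hxt))
  have hXnotpow : (insert m (Finset.Iio q)) ∉ Finset.powersetCard (n - b) (Finset.Iio m) := by
    rw [Finset.mem_powersetCard]
    rintro ⟨hXF, -⟩
    exact hmF (hXF (Finset.mem_insert_self _ _))
  have hcardInit : (Colex.initSeg (insert m (Finset.Iio q))).card = (n - d).choose (n - b) + 1 := by
    rw [hchar, Finset.card_insert_of_notMem hXnotpow, Finset.card_powersetCard, hcardF]
  -- Bc is big
  have hsymm : (n - d).choose (b - d) = (n - d).choose (n - b) := by
    have h1 : n - b ≤ n - d := by omega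
    have := Nat.choose_symm h1
    have h2 : n - d - (n - b) = b - d := by omega
    rw [h2] at this
    exact this
  have hBcbig : (Colex.initSeg (insert m (Finset.Iio q))).card ≤ Bc.card := by
    rw [hcardInit, hcardBc]
    omega
  have hinitseg : Colex.IsInitSeg (Colex.initSeg (insert m (Finset.Iio q))) (n - b) := by
    have := Colex.isInitSeg_initSeg (s := (insert m (Finset.Iio q)))
    rwa [hXcard] at this
  have hKK : (∂^[j] (Colex.initSeg (insert m (Finset.Iio q)))).card ≤ (∂^[j] Bc).card :=
    Finset.iterated_kk hBcsized hBcbig hinitseg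
  -- lower bound for the shadow of the initial segment
  have hmm' : m ∉ Finset.Iio m' := by
    simp [Finset.mem_Iio, Fin.lt_def, hm, hm']
    omega
  have hYcard : (insert m (Finset.Iio m')).card = a' + 1 := by
    rw [Finset.card_insert_of_notMem hmm', Fin.card_Iio]
  have hYX : (insert m (Finset.Iio m')) ⊆ (insert m (Finset.Iio q)) := by
    apply Finset.insert_subset_insert
    intro x hx
    rw [Finset.mem_Iio] at hx ⊢
    exact lt_of_lt_of_le hx (by rwa [← Fin.le_def] at hm'q)
  have hYnotpow : (insert m (Finset.Iio m')) ∉ Finset.powersetCard (a' + 1) (Finset.Iio m) := by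
    rw [Finset.mem_powersetCard]
    rintro ⟨hYF, -⟩
    exact hmF (hYF (Finset.mem_insert_self _ _))
  have hDcard : (insert (insert m (Finset.Iio m')) (Finset.powersetCard (a' + 1) (Finset.Iio m))).card = (n - d).choose (a' + 1) + 1 := by
    rw [Finset.card_insert_of_notMem hYnotpow, Finset.card_powersetCard, hcardF]
  have hDsub : (insert (insert m (Finset.Iio m')) (Finset.powersetCard (a' + 1) (Finset.Iio m))) ⊆ ∂^[j] (Colex.initSeg (insert m (Finset.Iio q))) := by
    intro s hs
    rw [Finset.mem_shadow_iterate_iff_exists_sdiff]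
    rcases Finset.mem_insert.1 hs with rfl | hspow
    · refine ⟨(insert m (Finset.Iio q)), Colex.mem_initSeg_self, hYX, ?_⟩
      rw [Finset.card_sdiff_of_subset hYX, hXcard, hYcard]
    · obtain ⟨hsF, hscard⟩ := Finset.mem_powersetCard.1 hspow
      obtain ⟨C, hsC, hCF, hCcard⟩ := Finset.exists_subsuperset_card_eq (n := n - b) hsF
        (by omega) (by omega)
      refine ⟨C, ?_, hsC, ?_⟩
      · rw [hchar]
        exact Finset.mem_insert_of_mem (Finset.mem_powersetCard.2 ⟨hCF, hCcard⟩)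
      · rw [Finset.card_sdiff_of_subset hsC, hCcard, hscard]
  have hDbound : (n - d).choose (a' + 1) + 1 ≤ (∂^[j] (Colex.initSeg (insert m (Finset.Iio q)))).card := by
    rw [← hDcard]
    exact Finset.card_le_card hDsub
  omega
end

section
/- Let A ⊆ ([n] choose a) and B ⊆ ([n] choose b) be cross-intersecting families with n ≥ a + b, and let d be a positive integer with d < b. If |A| ≥ C(n-1,a-1) + C(n-2,a-1) + ... + C(n-d,a-1), then |A| + (C(n-d,a)/C(n-d,b-d))·|B| ≤ C(n,a). -/
open Finset


-- hockey stick
lemma hockey (n a : ℕ) (ha : 1 ≤ a) : ∀ d, d ≤ n →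
    (∑ i ∈ Finset.Icc 1 d, (n - i).choose (a - 1)) + (n - d).choose a = n.choose a := by
  intro d
  induction d with
  | zero => simp
  | succ d ih =>
    intro hdn
    rw [Finset.sum_Icc_succ_top (by omega : 1 ≤ d + 1)]
    have h1 : n - d = (n - (d+1)) + 1 := by omega
    have h2 : (n - (d+1) + 1).choose a = (n - (d+1)).choose (a-1) + (n - (d+1)).choose a := by
      obtain ⟨a', rfl⟩ : ∃ a', a = a' + 1 := ⟨a - 1, by omega⟩
      simp [Nat.choose_succ_succ]
    have hih := ih (by omega)
    rw [h1, h2] at hih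
    omega

-- iterated local LYM
lemma iter_lym {α : Type*} [Fintype α] [DecidableEq α] (j : ℕ) :
    ∀ (r : ℕ) (𝒜 : Finset (Finset α)), j ≤ r → (𝒜 : Set (Finset α)).Sized r →
    (#𝒜 : ℝ) / (Fintype.card α).choose r ≤ (#(Finset.shadow^[j] 𝒜) : ℝ) / (Fintype.card α).choose (r - j) := by
  induction j with
  | zero => intro r 𝒜 _ _; simp
  | succ j ih =>
    intro r 𝒜 hj h
    have h1 : (#𝒜 : ℝ) / (Fintype.card α).choose r ≤ (#(Finset.shadow 𝒜) : ℝ) / (Fintype.card α).choose (r - 1) :=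
      Finset.card_div_choose_le_card_shadow_div_choose (by omega) h
    have h2 := ih (r - 1) (Finset.shadow 𝒜) (by omega) h.shadow
    rw [Function.iterate_succ_apply]
    have : r - 1 - j = r - (j + 1) := by omega
    rw [this] at h2
    exact h1.trans h2

open Finset.Colex in
lemma exists_initSeg (n r m : ℕ) (hm : m ≤ n.choose r) :
    ∃ 𝒞 : Finset (Finset (Fin n)), Finset.Colex.IsInitSeg 𝒞 r ∧ #𝒞 = m := by
  classical
  have htc : Function.Injective (toColex : Finset (Fin n) → Colex (Finset (Fin n))) := by
    intro s t h; simpa using h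
  set P : Finset (Colex (Finset (Fin n))) := (powersetCard r (univ : Finset (Fin n))).image toColex with hP
  have hPcard : #P = n.choose r := by
    rw [hP, Finset.card_image_of_injective _ htc, Finset.card_powersetCard, card_univ,
      Fintype.card_fin]
  set φ := P.orderIsoOfFin hPcard with hφ
  set 𝒞 : Finset (Finset (Fin n)) :=
    ((univ : Finset (Fin (n.choose r))).filter (fun i => i.val < m)).image
      (fun i => ofColex (φ i).val) with h𝒞
  have hmem : ∀ S : Finset (Fin n), S ∈ 𝒞 ↔ ∃ i : Fin (n.choose r), i.val < m ∧
      ofColex ((φ i).val) = S := by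
    intro S
    simp [h𝒞]
  have hsizedP : ∀ x : Colex (Finset (Fin n)), x ∈ P → (ofColex x).card = r := by
    intro x hx
    rw [hP, Finset.mem_image] at hx
    obtain ⟨T, hT, rfl⟩ := hx
    simpa using (Finset.mem_powersetCard.1 hT).2
  refine ⟨𝒞, ⟨?_, ?_⟩, ?_⟩
  · intro S hS
    rw [Finset.mem_coe, hmem] at hS
    obtain ⟨i, _, rfl⟩ := hS
    exact hsizedP _ (φ i).2
  · rintro S t hS ⟨hlt, htr⟩
    rw [hmem] at hS ⊢
    obtain ⟨i, him, rfl⟩ := hS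
    have htP : toColex t ∈ P := by
      rw [hP, Finset.mem_image]
      exact ⟨t, Finset.mem_powersetCard.2 ⟨Finset.subset_univ _, htr⟩, rfl⟩
    set j := φ.symm ⟨toColex t, htP⟩ with hj
    have hφj : φ j = ⟨toColex t, htP⟩ := OrderIso.apply_symm_apply _ _
    have hji : j < i := by
      rw [← φ.lt_iff_lt, hφj]
      exact Subtype.mk_lt_mk.2 (by rw [toColex_ofColex] at hlt; exact hlt)
    refine ⟨j, ?_, by rw [hφj, ofColex_toColex]⟩
    have := Fin.lt_def.1 hji
    omega
  · have hinj : Function.Injective (fun i : Fin (n.choose r) => ofColex (φ i).val) := by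
      intro i j hij
      have : φ i = φ j := Subtype.ext (by simpa using congrArg toColex hij)
      exact φ.injective this
    rw [h𝒞, Finset.card_image_of_injective _ hinj]
    have hbij : #((univ : Finset (Fin (n.choose r))).filter (fun i => i.val < m))
        = #(univ : Finset (Fin m)) := by
      refine Finset.card_bij (fun a ha => ⟨a.val, (Finset.mem_filter.1 ha).2⟩)
        (fun a ha => Finset.mem_univ _) ?_ ?_
      · intro a ha a' ha' hh
        exact Fin.ext (by simpa using congrArg Fin.val hh)
      · intro b _
        exact ⟨⟨b.val, lt_of_lt_of_le b.2 hm⟩, Finset.mem_filter.2 ⟨Finset.mem_univ _, b.2⟩, rfl⟩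
    rw [hbij, card_univ, Fintype.card_fin]

lemma card_filter_subset_powersetCard {α : Type*} [DecidableEq α] (u t : Finset α) (ht : t ⊆ u)
    (R : ℕ) (htR : #t ≤ R) :
    #((powersetCard R u).filter (fun S => t ⊆ S)) = (#u - #t).choose (R - #t) := by
  have : (#u - #t).choose (R - #t) = #(powersetCard (R - #t) (u \ t)) := by
    rw [Finset.card_powersetCard, Finset.card_sdiff_of_subset ht]
  rw [this]
  refine Finset.card_nbij' (fun S => S \ t) (fun T => T ∪ t) ?_ ?_ ?_ ?_
  · intro S hS
    rw [Finset.mem_coe, Finset.mem_filter, Finset.mem_powersetCard] at hS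
    obtain ⟨⟨hSu, hSR⟩, htS⟩ := hS
    rw [Finset.mem_coe, Finset.mem_powersetCard]
    exact ⟨Finset.sdiff_subset_sdiff hSu Finset.Subset.rfl, by rw [Finset.card_sdiff_of_subset htS, hSR]⟩
  · intro T hT
    rw [Finset.mem_coe, Finset.mem_powersetCard] at hT
    obtain ⟨hTu, hTc⟩ := hT
    have hdisj : Disjoint T t := Finset.disjoint_of_subset_left hTu (Finset.sdiff_disjoint)
    rw [Finset.mem_coe, Finset.mem_filter, Finset.mem_powersetCard]
    refine ⟨⟨Finset.union_subset (hTu.trans Finset.sdiff_subset) ht, ?_⟩, Finset.subset_union_right⟩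
    rw [Finset.card_union_of_disjoint hdisj, hTc]
    omega
  · intro S hS
    rw [Finset.mem_coe, Finset.mem_filter] at hS
    exact Finset.sdiff_union_of_subset hS.2
  · intro T hT
    rw [Finset.mem_coe, Finset.mem_powersetCard] at hT
    have hdisj : Disjoint T t := Finset.disjoint_of_subset_left hT.1 (Finset.sdiff_disjoint)
    simp only []
    rw [Finset.union_sdiff_cancel_right hdisj]

lemma colex_lt_of_topd {α : Type*} [LinearOrder α] {topd S T : Finset α}
    (hsep : ∀ x, x ∉ topd → ∀ y ∈ topd, x < y)
    (hS : ¬ topd ⊆ S) (hT : topd ⊆ T) :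
    toColex S < toColex T := by
  rw [Finset.Colex.toColex_lt_toColex_iff_exists_forall_lt]
  obtain ⟨j, hjtop, hjS⟩ := Finset.not_subset.1 hS
  refine ⟨j, hT hjtop, hjS, fun b hbS hbT => ?_⟩
  have hbtop : b ∉ topd := fun hb => hbT (hT hb)
  exact hsep b hbtop j hjtop

lemma isInitSeg_notsupset {α : Type*} [LinearOrder α] [Fintype α] [DecidableEq α]
    (topd : Finset α) (hsep : ∀ x, x ∉ topd → ∀ y ∈ topd, x < y) (R : ℕ) :
    Finset.Colex.IsInitSeg ((powersetCard R (univ : Finset α)).filter (fun S => ¬ topd ⊆ S)) R := by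
  constructor
  · intro S hS
    rw [Finset.mem_coe, Finset.mem_filter, Finset.mem_powersetCard] at hS
    exact hS.1.2
  · rintro S t hS ⟨hlt, htR⟩
    rw [Finset.mem_filter, Finset.mem_powersetCard] at hS ⊢
    refine ⟨⟨Finset.subset_univ _, htR⟩, fun htop => ?_⟩
    exact absurd (colex_lt_of_topd hsep hS.2 htop) (lt_asymm hlt)

set_option maxHeartbeats 1000000 in
theorem main_fin (n a b d : ℕ) (hn : a + b ≤ n) (hd : 0 < d) (hdb : d < b) (ha : 1 ≤ a)
    (A B : Finset (Finset (Fin n)))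
    (hA : (A : Set (Finset (Fin n))).Sized a) (hB : (B : Set (Finset (Fin n))).Sized b)
    (hcross : ∀ S ∈ A, ∀ T ∈ B, (S ∩ T).Nonempty)
    (hcard : ∑ i ∈ Finset.Icc 1 d, (n - i).choose (a - 1) ≤ A.card) :
    (A.card : ℝ) + (((n - d).choose a : ℝ) / ((n - d).choose (b - d))) * B.card ≤ n.choose a := by
  classical
  set md := ∑ i ∈ Finset.Icc 1 d, (n - i).choose (a - 1) with hmd_def
  set k := n - a - b with hk_def
  -- basic card bounds
  have hAsub : A ⊆ powersetCard a (univ : Finset (Fin n)) := fun S hS =>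
    mem_powersetCard.2 ⟨subset_univ _, hA hS⟩
  have hm_le : #A ≤ n.choose a := by
    have := card_le_card hAsub
    rwa [card_powersetCard, card_univ, Fintype.card_fin] at this
  -- complement family
  set 𝒜c := A.image (fun S => Sᶜ) with h𝒜c_def
  have h𝒜c_card : #𝒜c = #A := card_image_of_injective _ compl_injective
  have h𝒜c_sized : (𝒜c : Set (Finset (Fin n))).Sized (n - a) := by
    intro S hS
    rw [mem_coe, h𝒜c_def, mem_image] at hS
    obtain ⟨T, hT, rfl⟩ := hS
    rw [card_compl, Fintype.card_fin, hA hT]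
  have hsymm : n.choose (n - a) = n.choose a := Nat.choose_symm (by omega)
  -- initial segment of the same size
  obtain ⟨𝒞, h𝒞init, h𝒞card⟩ := exists_initSeg n (n - a) (#A) (by rw [hsymm]; exact hm_le)
  have hKK : #(shadow^[k] 𝒞) ≤ #(shadow^[k] 𝒜c) :=
    iterated_kk h𝒜c_sized (by rw [h𝒞card, h𝒜c_card]) h𝒞init
  -- top d elements
  have hdn : d < n := by omega
  set topd : Finset (Fin n) := Finset.Ici (⟨n - d, by omega⟩ : Fin n) with htopd_def
  have htopd_mem : ∀ x : Fin n, x ∈ topd ↔ n - d ≤ x.val := by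
    intro x; rw [htopd_def, Finset.mem_Ici]; exact Iff.rfl
  have htopd_card : #topd = d := by
    rw [htopd_def, Fin.card_Ici]
    change n - (n - d) = d
    omega
  have hsep : ∀ x : Fin n, x ∉ topd → ∀ y ∈ topd, x < y := by
    intro x hx y hy
    rw [htopd_mem] at hx hy
    exact Fin.lt_def.2 (by omega)
  -- the basic initial segment 𝒞₀
  set 𝒞₀ := (powersetCard (n - a) (univ : Finset (Fin n))).filter (fun S => ¬ topd ⊆ S) with h𝒞₀_def
  have h𝒞₀init := isInitSeg_notsupset topd hsep (n - a)
  have hsubcard : #((powersetCard (n - a) (univ : Finset (Fin n))).filter (fun S => topd ⊆ S))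
      = (n - d).choose (n - a - d) := by
    rw [card_filter_subset_powersetCard _ _ (subset_univ _) _ (by rw [htopd_card]; omega),
      card_univ, Fintype.card_fin, htopd_card]
  have h𝒞₀card : #𝒞₀ + (n - d).choose (n - a - d) = n.choose (n - a) := by
    rw [h𝒞₀_def, ← hsubcard]
    rw [add_comm]
    rw [card_filter_add_card_filter_not (p := fun S => topd ⊆ S)]
    rw [card_powersetCard, card_univ, Fintype.card_fin]
  have hhockey := hockey n a ha d (by omega)
  have hsym2 : (n - d).choose (n - a - d) = (n - d).choose a := by
    have h1 : n - a - d = (n - d) - a := by omega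
    rw [h1, Nat.choose_symm (by omega)]
  have h𝒞₀card' : #𝒞₀ = md := by
    rw [hsym2] at h𝒞₀card
    rw [hsymm] at h𝒞₀card
    omega
  -- 𝒞₀ ⊆ 𝒞
  have h𝒞₀sub : 𝒞₀ ⊆ 𝒞 := by
    rcases h𝒞₀init.total h𝒞init with h | h
    · exact h
    · have : 𝒞 = 𝒞₀ := eq_of_subset_of_card_le h (by rw [h𝒞card, h𝒞₀card']; exact hcard)
      rw [this]
  -- the extra part 𝒟
  set 𝒟 := 𝒞 \ 𝒞₀ with h𝒟_def
  have h𝒟card : #𝒟 = #A - md := by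
    rw [h𝒟_def, card_sdiff_of_subset h𝒞₀sub, h𝒞card, h𝒞₀card']
  have h𝒟top : ∀ S ∈ 𝒟, topd ⊆ S ∧ #S = n - a := by
    intro S hS
    rw [h𝒟_def, mem_sdiff] at hS
    have hsz : #S = n - a := h𝒞init.1 hS.1
    refine ⟨?_, hsz⟩
    by_contra htop
    exact hS.2 (by rw [h𝒞₀_def, mem_filter, mem_powersetCard]; exact ⟨⟨subset_univ _, hsz⟩, htop⟩)
  -- transfer to Fin (n - d)
  set emb : Fin (n - d) ↪ Fin n := Fin.castLEEmb (by omega) with hemb_def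
  have hrange : ∀ x : Fin n, x ∈ Set.range emb ↔ x ∉ topd := by
    intro x
    rw [htopd_mem]
    constructor
    · rintro ⟨y, rfl⟩
      have h1 : ((emb y : Fin n) : ℕ) = (y : ℕ) := rfl
      have := y.2
      omega
    · intro hx
      exact ⟨⟨x.val, by omega⟩, Fin.ext rfl⟩
  have hpre_back : ∀ S : Finset (Fin n), topd ⊆ S →
      ((S \ topd).preimage emb emb.injective.injOn).map emb = S \ topd := by
    intro S _
    rw [Finset.map_eq_image, Finset.image_preimage]
    apply Finset.filter_true_of_mem
    intro x hx
    rw [hrange]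
    exact (Finset.mem_sdiff.1 hx).2
  set 𝒟' := 𝒟.image (fun S => (S \ topd).preimage emb emb.injective.injOn) with h𝒟'_def
  have hunion_back : ∀ S : Finset (Fin n), topd ⊆ S → topd ∪ (S \ topd) = S := by
    intro S hS
    exact Finset.union_sdiff_of_subset hS
  have h𝒟'card : #𝒟' = #𝒟 := by
    rw [h𝒟'_def]
    apply Finset.card_image_of_injOn
    intro S hS S' hS' hEq
    have h1 := hpre_back S (h𝒟top S hS).1
    have h2 := hpre_back S' (h𝒟top S' hS').1
    have : S \ topd = S' \ topd := by
      rw [← h1, ← h2]; exact congrArg _ hEq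
    rw [← hunion_back S (h𝒟top S hS).1, ← hunion_back S' (h𝒟top S' hS').1, this]
  have h𝒟'sized : (𝒟' : Set (Finset (Fin (n - d)))).Sized (n - d - a) := by
    intro S' hS'
    rw [mem_coe, h𝒟'_def, mem_image] at hS'
    obtain ⟨S, hS, rfl⟩ := hS'
    obtain ⟨htopS, hcardS⟩ := h𝒟top S hS
    show #((S \ topd).preimage emb emb.injective.injOn) = n - d - a
    rw [← Finset.card_map emb, hpre_back S htopS, Finset.card_sdiff_of_subset htopS, htopd_card, hcardS]
    omega
  set 𝒮 := shadow^[k] 𝒟' with h𝒮_def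
  -- lower bound pieces for the shadow of 𝒞
  set g : Finset (Fin (n - d)) → Finset (Fin n) := fun T => topd ∪ T.map emb with hg_def
  have hdisj_map : ∀ T : Finset (Fin (n - d)), Disjoint topd (T.map emb) := by
    intro T
    rw [Finset.disjoint_left]
    intro x hx hx'
    rw [Finset.mem_map] at hx'
    obtain ⟨y, _, rfl⟩ := hx'
    exact ((hrange (emb y)).1 ⟨y, rfl⟩) hx
  have hg_inj : Set.InjOn g (𝒮 : Set (Finset (Fin (n - d)))) := by
    intro T _ T' _ hEq
    have h1 : (g T) \ topd = T.map emb := by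
      rw [hg_def]
      exact Finset.union_sdiff_cancel_left (hdisj_map T)
    have h2 : (g T') \ topd = T'.map emb := by
      rw [hg_def]
      exact Finset.union_sdiff_cancel_left (hdisj_map T')
    apply Finset.map_injective emb
    rw [← h1, ← h2, hEq]
  have hg_mem : ∀ T ∈ 𝒮, g T ∈ shadow^[k] 𝒞 := by
    intro T hT
    rw [h𝒮_def, Finset.mem_shadow_iterate_iff_exists_sdiff] at hT
    obtain ⟨S', hS', hTS', hcard'⟩ := hT
    rw [h𝒟'_def, mem_image] at hS'
    obtain ⟨S, hS, rfl⟩ := hS'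
    obtain ⟨htopS, hcardS⟩ := h𝒟top S hS
    rw [Finset.mem_shadow_iterate_iff_exists_sdiff]
    refine ⟨S, Finset.sdiff_subset hS, ?_, ?_⟩
    · rw [hg_def]
      have : T.map emb ⊆ S \ topd := by
        rw [← hpre_back S htopS]
        exact Finset.map_subset_map.2 hTS'
      refine Finset.union_subset htopS (this.trans Finset.sdiff_subset)
    · have hmapsub : T.map emb ⊆ ((S \ topd).preimage emb emb.injective.injOn).map emb :=
        Finset.map_subset_map.2 hTS'
      have hstep1 : S \ g T = (S \ topd) \ T.map emb := by
        rw [hg_def]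
        ext x
        simp only [Finset.mem_sdiff, Finset.mem_union]
        tauto
      have hstep : (((S \ topd).preimage emb emb.injective.injOn) \ T).map emb = S \ g T := by
        rw [Finset.map_eq_image, Finset.image_sdiff _ _ emb.injective, ← Finset.map_eq_image,
          ← Finset.map_eq_image, hpre_back S htopS, ← hstep1]
      rw [← hstep, Finset.card_map, hcard']
  -- part1 : b-sets not containing topd
  set part1 := (powersetCard b (univ : Finset (Fin n))).filter (fun T => ¬ topd ⊆ T) with hpart1_def
  have hpart1card : #part1 + (n - d).choose (b - d) = n.choose b := by
    have h1 : #((powersetCard b (univ : Finset (Fin n))).filter (fun T => topd ⊆ T))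
        = (n - d).choose (b - d) := by
      rw [card_filter_subset_powersetCard _ _ (subset_univ _) _ (by rw [htopd_card]; omega),
        card_univ, Fintype.card_fin, htopd_card]
    rw [hpart1_def, ← h1, add_comm, card_filter_add_card_filter_not (p := fun T => topd ⊆ T),
      card_powersetCard, card_univ, Fintype.card_fin]
  have hpart1sub : part1 ⊆ shadow^[k] 𝒞 := by
    intro T hT
    rw [hpart1_def, mem_filter, mem_powersetCard] at hT
    obtain ⟨⟨_, hTb⟩, hTtop⟩ := hT
    obtain ⟨x, hxtop, hxT⟩ := Finset.not_subset.1 hTtop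
    have hTsub : T ⊆ (univ : Finset (Fin n)).erase x := fun y hy =>
      Finset.mem_erase.2 ⟨fun h => hxT (h ▸ hy), mem_univ _⟩
    have herase : #((univ : Finset (Fin n)).erase x) = n - 1 := by
      rw [Finset.card_erase_of_mem (mem_univ _), card_univ, Fintype.card_fin]
    obtain ⟨S, hTS, hSx, hScard⟩ := Finset.exists_subsuperset_card_eq hTsub
      (by omega : #T ≤ n - a) (by omega : n - a ≤ #((univ : Finset (Fin n)).erase x))
    have hStop : ¬ topd ⊆ S := fun h =>
      (Finset.mem_erase.1 (hSx (h hxtop))).1 rfl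
    have hS𝒞₀ : S ∈ 𝒞₀ := by
      rw [h𝒞₀_def, mem_filter, mem_powersetCard]
      exact ⟨⟨subset_univ _, hScard⟩, hStop⟩
    rw [Finset.mem_shadow_iterate_iff_exists_sdiff]
    exact ⟨S, h𝒞₀sub hS𝒞₀, hTS, by rw [Finset.card_sdiff_of_subset hTS, hScard, hTb]⟩
  have hdisj12 : Disjoint part1 (𝒮.image g) := by
    rw [Finset.disjoint_left]
    intro T hT1 hT2
    rw [hpart1_def, mem_filter] at hT1
    rw [mem_image] at hT2
    obtain ⟨T', _, rfl⟩ := hT2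
    exact hT1.2 (by rw [hg_def]; exact Finset.subset_union_left)
  have hsub12 : part1 ∪ 𝒮.image g ⊆ shadow^[k] 𝒞 := by
    apply Finset.union_subset hpart1sub
    intro T hT
    rw [mem_image] at hT
    obtain ⟨T', hT', rfl⟩ := hT
    exact hg_mem T' hT'
  have hcount : #part1 + #𝒮 ≤ #(shadow^[k] 𝒞) := by
    have h1 : #(part1 ∪ 𝒮.image g) = #part1 + #(𝒮.image g) :=
      Finset.card_union_of_disjoint hdisj12
    have h2 : #(𝒮.image g) = #𝒮 := Finset.card_image_of_injOn hg_inj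
    have := Finset.card_le_card hsub12
    omega
  -- B is disjoint from the iterated shadow of 𝒜c
  have hBdisj : Disjoint B (shadow^[k] 𝒜c) := by
    rw [Finset.disjoint_left]
    intro T hTB hTsh
    rw [Finset.mem_shadow_iterate_iff_exists_sdiff] at hTsh
    obtain ⟨Sc, hSc, hTSc, _⟩ := hTsh
    rw [h𝒜c_def, mem_image] at hSc
    obtain ⟨S, hSA, rfl⟩ := hSc
    obtain ⟨x, hx⟩ := hcross S hSA T hTB
    rw [Finset.mem_inter] at hx
    exact (Finset.mem_compl.1 (hTSc hx.2)) hx.1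
  have hBsh : B ∪ shadow^[k] 𝒜c ⊆ powersetCard b (univ : Finset (Fin n)) := by
    apply Finset.union_subset
    · exact fun T hT => mem_powersetCard.2 ⟨subset_univ _, hB hT⟩
    · intro T hT
      have := h𝒜c_sized.shadow_iterate (k := k) hT
      rw [mem_powersetCard]
      exact ⟨subset_univ _, by rw [this]; omega⟩
  have hBbound : #B + #(shadow^[k] 𝒜c) ≤ n.choose b := by
    have h1 : #(B ∪ shadow^[k] 𝒜c) = #B + #(shadow^[k] 𝒜c) :=
      Finset.card_union_of_disjoint hBdisj
    have := Finset.card_le_card hBsh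
    rw [card_powersetCard, card_univ, Fintype.card_fin] at this
    omega
  -- key natural-number inequality
  have hBS : #B + #𝒮 ≤ (n - d).choose (b - d) := by omega
  -- LYM
  have hlym := iter_lym (α := Fin (n - d)) k (n - d - a) 𝒟' (by omega) h𝒟'sized
  rw [Fintype.card_fin] at hlym
  have hch1 : (n - d).choose (n - d - a) = (n - d).choose a := Nat.choose_symm (by omega)
  have hch2 : n - d - a - k = b - d := by omega
  rw [hch1, hch2, ← h𝒮_def] at hlym
  -- final real arithmetic
  have hX : (0 : ℝ) < (n - d).choose a := by
    have : 0 < (n - d).choose a := Nat.choose_pos (by omega)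
    exact_mod_cast this
  have hY : (0 : ℝ) < (n - d).choose (b - d) := by
    have : 0 < (n - d).choose (b - d) := Nat.choose_pos (by omega)
    exact_mod_cast this
  have hlym' : ((#𝒟' : ℝ)) * ((n - d).choose (b - d) : ℝ) ≤ ((n - d).choose a : ℝ) * #𝒮 := by
    rw [div_le_div_iff₀ hX hY] at hlym
    linarith
  have h𝒟'A : (#𝒟' : ℝ) = (#A : ℝ) - md := by
    rw [h𝒟'card, h𝒟card]
    have : (md : ℕ) ≤ #A := hcard
    push_cast [Nat.cast_sub this]
    ring
  have hgoalrhs : (n.choose a : ℝ) = (md : ℝ) + ((n - d).choose a : ℝ) := by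
    exact_mod_cast hhockey.symm
  have hBSr : (#B : ℝ) + (#𝒮 : ℝ) ≤ ((n - d).choose (b - d) : ℝ) := by exact_mod_cast hBS
  rw [hgoalrhs]
  set X := ((n - d).choose a : ℝ)
  set Y := ((n - d).choose (b - d) : ℝ)
  have h1 : X / Y * #B ≤ X / Y * (Y - #𝒮) := by
    apply mul_le_mul_of_nonneg_left _ (le_of_lt (div_pos hX hY))
    linarith
  have h2 : X / Y * (Y - #𝒮) + X * #𝒮 / Y = X := by
    rw [div_mul_eq_mul_div, ← add_div, ← mul_add, sub_add_cancel]
    exact mul_div_cancel_right₀ X (ne_of_gt hY)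
  have h3 : (#A : ℝ) - md ≤ X * #𝒮 / Y := by
    rw [le_div_iff₀ hY, ← h𝒟'A]
    exact hlym'
  linarith

theorem stmt_3 (n a b d : ℕ) (hn : a + b ≤ n) (hd : 0 < d) (hdb : d < b)
    (A B : Finset (Finset ℕ))
    (hA : A ⊆ Finset.powersetCard a (Finset.Icc 1 n))
    (hB : B ⊆ Finset.powersetCard b (Finset.Icc 1 n))
    (hcross : ∀ S ∈ A, ∀ T ∈ B, (S ∩ T).Nonempty)
    (hcard : ∑ i ∈ Finset.Icc 1 d, (n - i).choose (a - 1) ≤ A.card) :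
    (A.card : ℝ) + (((n - d).choose a : ℝ) / ((n - d).choose (b - d))) * B.card ≤ n.choose a := by
  classical
  by_cases ha : a = 0
  · subst ha
    have hA' : A ⊆ {∅} := by
      intro S hS
      have := Finset.mem_powersetCard.1 (hA hS)
      rw [Finset.mem_singleton]
      exact Finset.card_eq_zero.1 this.2
    have hsum : ∑ i ∈ Finset.Icc 1 d, (n - i).choose (0 - 1) = d := by
      simp
    have hcard1 : 1 ≤ #A := by omega
    have hAeq : A = {∅} := Finset.eq_of_subset_of_card_le hA' (by simpa using hcard1)
    have hBempty : B = ∅ := by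
      rw [Finset.eq_empty_iff_forall_notMem]
      intro T hT
      obtain ⟨x, hx⟩ := hcross ∅ (by rw [hAeq]; exact Finset.mem_singleton_self ∅) T hT
      simp at hx
    rw [hAeq, hBempty]
    simp
  · have ha1 : 1 ≤ a := by omega
    have hn0 : 0 < n := by omega
    set e : ℕ → Fin n := fun x => ⟨(x - 1) % n, Nat.mod_lt _ hn0⟩ with he_def
    have hinj : ∀ x ∈ Finset.Icc 1 n, ∀ y ∈ Finset.Icc 1 n, e x = e y → x = y := by
      intro x hx y hy h
      rw [Finset.mem_Icc] at hx hy
      have h1 : (x - 1) % n = x - 1 := Nat.mod_eq_of_lt (by omega)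
      have h2 : (y - 1) % n = y - 1 := Nat.mod_eq_of_lt (by omega)
      have h3 := congrArg Fin.val h
      simp only [he_def] at h3
      omega
    set F : Finset ℕ → Finset (Fin n) := fun S => S.image e with hF_def
    have hFcard : ∀ S : Finset ℕ, S ⊆ Finset.Icc 1 n → #(F S) = #S := by
      intro S hS
      exact Finset.card_image_of_injOn (fun x hx y hy h => hinj x (hS hx) y (hS hy) h)
    have hFinj : ∀ S, S ⊆ Finset.Icc 1 n → ∀ T, T ⊆ Finset.Icc 1 n → F S = F T → S = T := by
      intro S hS T hT h
      apply Finset.Subset.antisymm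
      · intro x hx
        have : e x ∈ F T := h ▸ Finset.mem_image_of_mem e hx
        obtain ⟨y, hy, hxy⟩ := Finset.mem_image.1 this
        rwa [hinj y (hT hy) x (hS hx) hxy] at hy
      · intro x hx
        have : e x ∈ F S := h ▸ Finset.mem_image_of_mem e hx
        obtain ⟨y, hy, hxy⟩ := Finset.mem_image.1 this
        rwa [hinj y (hS hy) x (hT hx) hxy] at hy
    have hAmem : ∀ S ∈ A, S ⊆ Finset.Icc 1 n ∧ #S = a := by
      intro S hS
      exact Finset.mem_powersetCard.1 (hA hS)
    have hBmem : ∀ T ∈ B, T ⊆ Finset.Icc 1 n ∧ #T = b := by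
      intro T hT
      exact Finset.mem_powersetCard.1 (hB hT)
    set A' := A.image F with hA'_def
    set B' := B.image F with hB'_def
    have hA'card : #A' = #A := Finset.card_image_of_injOn
      (fun S hS T hT h => hFinj S (hAmem S hS).1 T (hAmem T hT).1 h)
    have hB'card : #B' = #B := Finset.card_image_of_injOn
      (fun S hS T hT h => hFinj S (hBmem S hS).1 T (hBmem T hT).1 h)
    have hA'sized : (A' : Set (Finset (Fin n))).Sized a := by
      intro S' hS'
      rw [Finset.mem_coe, hA'_def, Finset.mem_image] at hS'
      obtain ⟨S, hS, rfl⟩ := hS'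
      rw [hFcard S (hAmem S hS).1]
      exact (hAmem S hS).2
    have hB'sized : (B' : Set (Finset (Fin n))).Sized b := by
      intro T' hT'
      rw [Finset.mem_coe, hB'_def, Finset.mem_image] at hT'
      obtain ⟨T, hT, rfl⟩ := hT'
      rw [hFcard T (hBmem T hT).1]
      exact (hBmem T hT).2
    have hcross' : ∀ S' ∈ A', ∀ T' ∈ B', (S' ∩ T').Nonempty := by
      intro S' hS' T' hT'
      rw [hA'_def, Finset.mem_image] at hS'
      rw [hB'_def, Finset.mem_image] at hT'
      obtain ⟨S, hS, rfl⟩ := hS'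
      obtain ⟨T, hT, rfl⟩ := hT'
      obtain ⟨x, hx⟩ := hcross S hS T hT
      rw [Finset.mem_inter] at hx
      exact ⟨e x, Finset.mem_inter.2 ⟨Finset.mem_image_of_mem e hx.1,
        Finset.mem_image_of_mem e hx.2⟩⟩
    have := main_fin n a b d hn hd hdb ha1 A' B' hA'sized hB'sized hcross'
      (by rw [hA'card]; exact hcard)
    rwa [hA'card, hB'card] at this
end

section
/- Let n > 2k ≥ 4. For 3 ≤ i ≤ k, let F_i denote the family of all k-subsets F of [n] such that either 1 ∈ F and F ∩ [2,i] ≠ ∅, or [2,i] ⊆ F. Then |F_3| = |F_4| < |F_5| < ... < |F_{k+1}| < C(n-1, k-1). -/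
open Finset

/-- The family F_i: all k-subsets F of [n] with (1 ∈ F and F ∩ [2,i] ≠ ∅) or [2,i] ⊆ F. -/
def famF (n k i : ℕ) : Finset (Finset ℕ) :=
  (Finset.powersetCard k (Finset.Icc 1 n)).filter
    (fun F => (1 ∈ F ∧ (F ∩ Finset.Icc 2 i).Nonempty) ∨ Finset.Icc 2 i ⊆ F)


lemma count_sub (U S : Finset ℕ) (k : ℕ) (hS : S ⊆ U) (hk : S.card ≤ k) :
    ((powersetCard k U).filter (fun F => S ⊆ F)).card
      = (U.card - S.card).choose (k - S.card) := by
  rw [← Finset.card_sdiff_of_subset hS, ← Finset.card_powersetCard]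
  apply Finset.card_bij (fun F _ => F \ S)
  · intro F hF
    simp only [mem_filter, Finset.mem_powersetCard] at hF
    rw [Finset.mem_powersetCard]
    exact ⟨sdiff_subset_sdiff hF.1.1 le_rfl,
      by rw [Finset.card_sdiff_of_subset hF.2, hF.1.2]⟩
  · intro F hF F' hF' h
    simp only [mem_filter, Finset.mem_powersetCard] at hF hF'
    have : F \ S ∪ S = F' \ S ∪ S := by rw [h]
    rwa [Finset.sdiff_union_of_subset hF.2, Finset.sdiff_union_of_subset hF'.2] at this
  · intro G hG
    rw [Finset.mem_powersetCard] at hG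
    refine ⟨G ∪ S, ?_, ?_⟩
    · simp only [mem_filter, Finset.mem_powersetCard]
      have hdisj : Disjoint G S := by
        exact Finset.disjoint_left.mpr (fun a haG => (Finset.mem_sdiff.mp (hG.1 haG)).2)
      refine ⟨⟨Finset.union_subset (hG.1.trans Finset.sdiff_subset) hS, ?_⟩, Finset.subset_union_right⟩
      rw [Finset.card_union_of_disjoint hdisj, hG.2]
      omega
    · have hdisj : Disjoint G S := by
        exact Finset.disjoint_left.mpr (fun a haG => (Finset.mem_sdiff.mp (hG.1 haG)).2)
      rw [Finset.union_sdiff_distrib, Finset.sdiff_self, Finset.union_empty,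
        Finset.sdiff_eq_self_of_disjoint hdisj]

lemma choose_mono_aux (m r s : ℕ) (hrs : r ≤ s) (hs : s ≤ m / 2) :
    m.choose r ≤ m.choose s := by
  induction s, hrs using Nat.le_induction with
  | base => rfl
  | succ s hrs ih =>
    exact (ih (by omega)).trans (Nat.choose_le_succ_of_lt_half_left (by omega))

lemma choose_le_choose' (m r s : ℕ) (hrs : r ≤ s) (h : r + s ≤ m) :
    m.choose r ≤ m.choose s := by
  by_cases hhalf : s ≤ m / 2
  · exact choose_mono_aux m r s hrs hhalf
  · rw [← Nat.choose_symm (show s ≤ m by omega)]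
    exact choose_mono_aux m r (m - s) (by omega) (by omega)

lemma choose_strict (m a b : ℕ) (hab : a < b) (h : a + b < m) :
    m.choose a < m.choose b := by
  have h1 : m.choose a < m.choose (a + 1) := by
    have hid := Nat.choose_succ_right_eq m a
    have hpos : 0 < m.choose a := Nat.choose_pos (by omega)
    have hma : a + 2 <= m - a := by omega
    have : m.choose a * (a + 1) < m.choose (a + 1) * (a + 1) := by
      rw [hid]
      calc m.choose a * (a + 1) < m.choose a * (a + 2) := by
            exact Nat.mul_lt_mul_of_le_of_lt le_rfl (by omega) hpos
        _ ≤ m.choose a * (m - a) := Nat.mul_le_mul_left _ hma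
    exact Nat.lt_of_mul_lt_mul_right this
  exact h1.trans_le (choose_le_choose' m (a+1) b hab (by omega))

lemma count1 (n k : ℕ) (hk : 1 ≤ k) (hn : 1 ≤ n) :
    ((powersetCard k (Icc 1 n)).filter (fun F => 1 ∈ F)).card = (n - 1).choose (k - 1) := by
  have h := count_sub (Icc 1 n) {1} k (by simp [hn]) (by simpa using hk)
  simp only [Finset.singleton_subset_iff, Finset.card_singleton, Nat.card_Icc] at h
  convert h using 3 <;> omega

lemma count2 (n k i : ℕ) (hk : 1 ≤ k) (h2 : 2 ≤ i) (hin : i ≤ n) :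
    ((powersetCard k (Icc 1 n)).filter (fun F => 1 ∈ F ∧ F ∩ Icc 2 i = ∅)).card
      = (n - i).choose (k - 1) := by
  have hTU : Icc 2 i ⊆ Icc 1 n := Finset.Icc_subset_Icc (by omega) hin
  have heq : (powersetCard k (Icc 1 n)).filter (fun F => 1 ∈ F ∧ F ∩ Icc 2 i = ∅)
      = (powersetCard k (Icc 1 n \ Icc 2 i)).filter (fun F => {1} ⊆ F) := by
    ext F
    simp only [mem_filter, Finset.mem_powersetCard, Finset.subset_sdiff,
      Finset.singleton_subset_iff, ← Finset.disjoint_iff_inter_eq_empty]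
    tauto
  have h1S : ({1} : Finset ℕ) ⊆ Icc 1 n \ Icc 2 i := by
    simp only [Finset.singleton_subset_iff, Finset.mem_sdiff, Finset.mem_Icc]
    omega
  rw [heq, count_sub _ _ _ h1S (by simpa using hk), Finset.card_sdiff_of_subset hTU]
  simp only [Nat.card_Icc, Finset.card_singleton]
  congr 1 <;> omega

lemma count3 (n k i : ℕ) (h2 : 2 ≤ i) (hik : i ≤ k + 1) (hin : i ≤ n) :
    ((powersetCard k (Icc 1 n)).filter (fun F => 1 ∉ F ∧ Icc 2 i ⊆ F)).card
      = (n - i).choose (k + 1 - i) := by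
  have heq : (powersetCard k (Icc 1 n)).filter (fun F => 1 ∉ F ∧ Icc 2 i ⊆ F)
      = (powersetCard k (Icc 2 n)).filter (fun F => Icc 2 i ⊆ F) := by
    ext F
    simp only [mem_filter, Finset.mem_powersetCard]
    constructor
    · rintro ⟨⟨hFU, hcard⟩, h1, hsub⟩
      refine ⟨⟨fun x hx => ?_, hcard⟩, hsub⟩
      have := hFU hx
      simp only [Finset.mem_Icc] at this ⊢
      have : x ≠ 1 := fun h => h1 (h ▸ hx)
      omega
    · rintro ⟨⟨hFU, hcard⟩, hsub⟩
      refine ⟨⟨hFU.trans (Finset.Icc_subset_Icc (by omega) le_rfl), hcard⟩, fun h1 => ?_, hsub⟩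
      have := hFU h1
      simp only [Finset.mem_Icc] at this; omega
  rw [heq, count_sub _ _ _ (Finset.Icc_subset_Icc le_rfl hin) (by simp [Nat.card_Icc]; omega)]
  simp only [Nat.card_Icc]
  congr 1 <;> omega

lemma famF_split (n k i : ℕ) (h2 : 2 ≤ i) :
    (famF n k i).card =
      ((powersetCard k (Icc 1 n)).filter (fun F => 1 ∈ F ∧ (F ∩ Icc 2 i).Nonempty)).card
      + ((powersetCard k (Icc 1 n)).filter (fun F => 1 ∉ F ∧ Icc 2 i ⊆ F)).card := by
  rw [← Finset.card_union_of_disjoint]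
  · congr 1
    rw [famF, ← Finset.filter_or]
    apply Finset.filter_congr
    intro F _
    constructor
    · rintro (⟨h1, hne⟩ | hsub)
      · exact Or.inl ⟨h1, hne⟩
      · by_cases h1 : 1 ∈ F
        · exact Or.inl ⟨h1, ⟨2, Finset.mem_inter.mpr ⟨hsub (Finset.mem_Icc.mpr ⟨le_rfl, h2⟩),
            Finset.mem_Icc.mpr ⟨le_rfl, h2⟩⟩⟩⟩
        · exact Or.inr ⟨h1, hsub⟩
    · rintro (⟨h1, hne⟩ | ⟨h1, hsub⟩)
      · exact Or.inl ⟨h1, hne⟩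
      · exact Or.inr hsub
  · rw [Finset.disjoint_left]
    intro F hF hF'
    exact (Finset.mem_filter.mp hF').2.1 (Finset.mem_filter.mp hF).2.1

lemma cardA (n k i : ℕ) (hk : 1 ≤ k) (h2 : 2 ≤ i) (hin : i ≤ n) :
    ((powersetCard k (Icc 1 n)).filter (fun F => 1 ∈ F ∧ (F ∩ Icc 2 i).Nonempty)).card
      + (n - i).choose (k - 1) = (n - 1).choose (k - 1) := by
  have key := Finset.card_filter_add_card_filter_not
    (s := (powersetCard k (Icc 1 n)).filter (fun F => 1 ∈ F))
    (p := fun F => (F ∩ Icc 2 i).Nonempty)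
  rw [Finset.filter_filter, Finset.filter_filter] at key
  rw [count1 n k hk (by omega)] at key
  rw [← key]
  congr 1
  rw [← count2 n k i hk h2 hin]
  apply congrArg
  apply Finset.filter_congr; intro F _
  simp [Finset.not_nonempty_iff_eq_empty]

lemma famF_card (n k i : ℕ) (h2 : 2 ≤ i) (hik : i ≤ k + 1) (hk : 1 ≤ k) (hin : i ≤ n) :
    (famF n k i).card + (n - i).choose (k - 1)
      = (n - 1).choose (k - 1) + (n - i).choose (k + 1 - i) := by
  rw [famF_split n k i h2, count3 n k i h2 hik hin]
  have := cardA n k i hk h2 hin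
  omega

lemma famF_card' (n k i : ℕ) (h2 : k + 2 ≤ i) (hk : 1 ≤ k) (hin : i ≤ n) :
    (famF n k i).card + (n - i).choose (k - 1) = (n - 1).choose (k - 1) := by
  rw [famF_split n k i (by omega)]
  have hB : ((powersetCard k (Icc 1 n)).filter (fun F => 1 ∉ F ∧ Icc 2 i ⊆ F)).card = 0 := by
    rw [Finset.card_eq_zero, Finset.filter_eq_empty_iff]
    rintro F hF ⟨h1, hsub⟩
    rw [Finset.mem_powersetCard] at hF
    have := Finset.card_le_card hsub
    rw [Nat.card_Icc, hF.2] at this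
    omega
  have := cardA n k i hk (by omega) hin
  omega

theorem stmt_5 (n k : ℕ) (hk : 2 ≤ k) (hn : 2 * k < n) :
    (famF n k 3).card = (famF n k 4).card ∧
    (∀ i, 4 ≤ i → i ≤ k → (famF n k i).card < (famF n k (i + 1)).card) ∧
    (famF n k (k + 1)).card < (n - 1).choose (k - 1) := by
  refine ⟨?_, ?_, ?_⟩
  · -- |F3| = |F4|
    have h3 := famF_card n k 3 (by omega) (by omega) (by omega) (by omega)
    rw [show k + 1 - 3 = k - 2 from by omega] at h3
    rcases eq_or_lt_of_le hk with hk2 | hk3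
    · -- k = 2
      subst hk2
      have h4 := famF_card' n 2 4 (by omega) (by omega) (by omega)
      simp only [show (2:ℕ) - 1 = 1 from rfl, show (2:ℕ) - 2 = 0 from rfl,
        Nat.choose_one_right, Nat.choose_zero_right] at h3 h4
      omega
    · -- k ≥ 3
      have h4 := famF_card n k 4 (by omega) (by omega) (by omega) (by omega)
      rw [show k + 1 - 4 = k - 3 from by omega] at h4
      have e1 : (n - 3).choose (k - 1) = (n - 4).choose (k - 2) + (n - 4).choose (k - 1) := by
        rw [show n - 3 = (n - 4) + 1 from by omega, show k - 1 = (k - 2) + 1 from by omega,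
          Nat.choose_succ_succ]
      have e2 : (n - 3).choose (k - 2) = (n - 4).choose (k - 3) + (n - 4).choose (k - 2) := by
        rw [show n - 3 = (n - 4) + 1 from by omega, show k - 2 = (k - 3) + 1 from by omega,
          Nat.choose_succ_succ]
      linarith
  · -- strict increase
    intro i hi4 hik
    have h1 := famF_card n k i (by omega) (by omega) (by omega) (by omega)
    have h2 := famF_card n k (i + 1) (by omega) (by omega) (by omega) (by omega)
    rw [show k + 1 - (i + 1) = k - i from by omega,
      show n - (i + 1) = n - i - 1 from by omega] at h2
    have e1 : (n - i).choose (k - 1) = (n - i - 1).choose (k - 2) + (n - i - 1).choose (k - 1) := by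
      rw [show n - i = (n - i - 1) + 1 from by omega, show k - 1 = (k - 2) + 1 from by omega,
        Nat.choose_succ_succ]
      simp
    have e2 : (n - i).choose (k + 1 - i)
        = (n - i - 1).choose (k - i) + (n - i - 1).choose (k + 1 - i) := by
      rw [show n - i = (n - i - 1) + 1 from by omega,
        show k + 1 - i = (k - i) + 1 from by omega, Nat.choose_succ_succ]
      simp
    have hlt : (n - i - 1).choose (k + 1 - i) < (n - i - 1).choose (k - 2) :=
      choose_strict _ _ _ (by omega) (by omega)
    linarith
  · -- |F_{k+1}| < C(n-1, k-1)
    have h := famF_card n k (k + 1) (by omega) le_rfl (by omega) (by omega)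
    rw [show k + 1 - (k + 1) = 0 from by omega, Nat.choose_zero_right] at h
    have hge : k ≤ (n - (k + 1)).choose (k - 1) := by
      have h1 : k.choose (k - 1) = k := by
        rw [← Nat.choose_symm (by omega : k - 1 ≤ k), show k - (k - 1) = 1 from by omega,
          Nat.choose_one_right]
      calc k = k.choose (k - 1) := h1.symm
        _ ≤ (n - (k + 1)).choose (k - 1) := Nat.choose_le_choose _ (by omega)
    omega
end

section
/- Suppose F_△ ⊊ F ⊆ F_3 where F_△ = {F ∈ ([n] choose k) : |F ∩ [3]| = 2} and F_3 = {F ∈ ([n] choose k) : |F ∩ [3]| ≥ 2}, and n > 2k ≥ 6. Then γ(F_△) = γ(F), but for every C > 1, γ_C(F) < γ_C(F_△). -/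
open Finset

def deg (F : Finset (Finset ℕ)) (x : ℕ) : ℕ := (F.filter (fun A => x ∈ A)).card

def maxDeg (n : ℕ) (F : Finset (Finset ℕ)) : ℕ := (Finset.Icc 1 n).sup (deg F)

/-- The pure triangle family on [n]. -/
def triangleFam (n k : ℕ) : Finset (Finset ℕ) :=
  (Finset.powersetCard k (Finset.Icc 1 n)).filter
    (fun F => (F ∩ ({1, 2, 3} : Finset ℕ)).card = 2)

/-- The family F_3 = {F : |F ∩ [3]| ≥ 2} on [n]. -/
def bigTriangleFam (n k : ℕ) : Finset (Finset ℕ) :=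
  (Finset.powersetCard k (Finset.Icc 1 n)).filter
    (fun F => 2 ≤ (F ∩ ({1, 2, 3} : Finset ℕ)).card)


lemma countInter (s Q P : Finset ℕ) (k : ℕ) (hPQ : P ⊆ Q) (hQs : Q ⊆ s)
    (hk : P.card ≤ k) :
    ((Finset.powersetCard k s).filter (fun A => A ∩ Q = P)).card
      = (s.card - Q.card).choose (k - P.card) := by
  rw [← Finset.card_sdiff_of_subset hQs, ← Finset.card_powersetCard (k - P.card) (s \ Q)]
  apply Finset.card_nbij' (fun A => A \ Q) (fun B => B ∪ P)
  · intro A hA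
    simp only [Finset.mem_coe, mem_filter, Finset.mem_powersetCard] at hA
    obtain ⟨⟨hAs, hAc⟩, hAQ⟩ := hA
    rw [Finset.mem_coe, Finset.mem_powersetCard]
    constructor
    · exact sdiff_subset_sdiff hAs (le_refl _)
    · have := Finset.card_sdiff_add_card_inter A Q
      rw [hAQ] at this
      beta_reduce
      omega
  · intro B hB
    rw [Finset.mem_coe, Finset.mem_powersetCard] at hB
    obtain ⟨hBs, hBc⟩ := hB
    have hdisjBQ : Disjoint B Q := Finset.sdiff_disjoint.mono_left hBs
    simp only [Finset.mem_coe, mem_filter, Finset.mem_powersetCard]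
    refine ⟨⟨?_, ?_⟩, ?_⟩
    · exact union_subset (hBs.trans (sdiff_subset)) (hPQ.trans hQs)
    · rw [Finset.card_union_of_disjoint (hdisjBQ.mono_right hPQ)]
      omega
    · rw [Finset.union_inter_distrib_right, (Finset.inter_eq_left).mpr hPQ,
        Finset.disjoint_iff_inter_eq_empty.mp hdisjBQ, Finset.empty_union]
  · intro A hA
    simp only [Finset.mem_coe, mem_filter] at hA
    beta_reduce
    rw [← hA.2, Finset.sdiff_union_inter]
  · intro B hB
    rw [Finset.mem_coe, Finset.mem_powersetCard] at hB
    have hdisjBQ : Disjoint B Q := Finset.sdiff_disjoint.mono_left hB.1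
    beta_reduce
    rw [Finset.union_sdiff_distrib, Finset.sdiff_eq_self_of_disjoint hdisjBQ,
      Finset.sdiff_eq_empty_iff_subset.mpr hPQ, Finset.union_empty]

lemma pair_sub (s : Finset ℕ) (hs : s ⊆ {1,2,3}) (h2 : s.card = 2) :
    s = {1,2} ∨ s = {1,3} ∨ s = {2,3} := by
  obtain ⟨a, b, hab, rfl⟩ := Finset.card_eq_two.mp h2
  have ha : a ∈ ({1,2,3} : Finset ℕ) := hs (by simp)
  have hb : b ∈ ({1,2,3} : Finset ℕ) := hs (by simp)
  simp only [mem_insert, mem_singleton] at ha hb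
  rcases ha with rfl|rfl|rfl <;> rcases hb with rfl|rfl|rfl <;>
    first
      | exact absurd rfl hab
      | decide

lemma choose_ineq (n k : ℕ) (hk : 3 ≤ k) (hn : 2 * k < n) :
    3 * (n - 4).choose (k - 3) ≤ 2 * (n - 3).choose (k - 2) := by
  set N := n - 3 with hN
  set K := k - 2 with hK
  have hN1 : 1 ≤ N := by omega
  have hK1 : 1 ≤ K := by omega
  have hid : N * (N - 1).choose (K - 1) = N.choose K * K := by
    have h := Nat.add_one_mul_choose_eq (N - 1) (K - 1)
    have e1 : N - 1 + 1 = N := by omega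
    have e2 : K - 1 + 1 = K := by omega
    rw [e1, e2] at h
    exact h
  have key : N * (3 * (N - 1).choose (K - 1)) ≤ N * (2 * N.choose K) := by
    calc N * (3 * (N - 1).choose (K - 1)) = 3 * (N * (N - 1).choose (K - 1)) := by ring
    _ = 3 * (N.choose K * K) := by rw [hid]
    _ ≤ 2 * (N.choose K * N) := by
        have h3K : 3 * K ≤ 2 * N := by omega
        nlinarith [Nat.zero_le (N.choose K)]
    _ = N * (2 * N.choose K) := by ring
  have := Nat.le_of_mul_le_mul_left key (by omega : 0 < N)
  have e3 : n - 4 = N - 1 := by omega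
  have e4 : k - 3 = K - 1 := by omega
  rw [e3, e4]
  exact this

lemma Qsub (n : ℕ) (hn : 3 ≤ n) : ({1,2,3} : Finset ℕ) ⊆ Finset.Icc 1 n := by
  intro t ht
  simp only [mem_insert, mem_singleton] at ht
  rw [Finset.mem_Icc]
  omega

lemma deg_small (n k : ℕ) (hk : 3 ≤ k) (hn : 2 * k < n) (x : ℕ) (P₁ P₂ : Finset ℕ)
    (h1 : P₁ ⊆ {1,2,3}) (h2 : P₂ ⊆ {1,2,3}) (hc1 : P₁.card = 2) (hc2 : P₂.card = 2)
    (hne : P₁ ≠ P₂)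
    (hch : ∀ s : Finset ℕ, s ⊆ {1,2,3} → s.card = 2 → (x ∈ s ↔ s = P₁ ∨ s = P₂)) :
    deg (triangleFam n k) x = 2 * (n - 3).choose (k - 2) := by
  have hx1 : x ∈ P₁ := (hch P₁ h1 hc1).mpr (Or.inl rfl)
  unfold deg triangleFam
  rw [Finset.filter_filter]
  have e : (Finset.powersetCard k (Finset.Icc 1 n)).filter
        (fun A => (A ∩ ({1,2,3} : Finset ℕ)).card = 2 ∧ x ∈ A)
      = (Finset.powersetCard k (Finset.Icc 1 n)).filter
        (fun A => A ∩ ({1,2,3} : Finset ℕ) = P₁ ∨ A ∩ ({1,2,3} : Finset ℕ) = P₂) := by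
    apply Finset.filter_congr
    intro A _
    constructor
    · rintro ⟨hcard, hxA⟩
      have hxs : x ∈ A ∩ ({1,2,3} : Finset ℕ) :=
        Finset.mem_inter.mpr ⟨hxA, h1 hx1⟩
      exact (hch _ Finset.inter_subset_right hcard).mp hxs
    · rintro (h | h)
      · exact ⟨by rw [h]; exact hc1, (Finset.mem_inter.mp (h ▸ hx1)).1⟩
      · have hx2 : x ∈ P₂ := (hch P₂ h2 hc2).mpr (Or.inr rfl)
        exact ⟨by rw [h]; exact hc2, (Finset.mem_inter.mp (h ▸ hx2)).1⟩
  rw [e, Finset.filter_or, Finset.card_union_of_disjoint]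
  · have hQs := Qsub n (by omega)
    rw [countInter _ _ _ _ h1 hQs (by omega), countInter _ _ _ _ h2 hQs (by omega)]
    have hcQ : ({1,2,3} : Finset ℕ).card = 3 := by decide
    rw [Nat.card_Icc, hcQ, hc1, hc2]
    have : n + 1 - 1 = n := by omega
    rw [this]
    ring
  · rw [Finset.disjoint_left]
    intro A hA hA2
    rw [Finset.mem_filter] at hA hA2
    exact hne (hA.2.symm.trans hA2.2)

lemma deg_large (n k x : ℕ) (hk : 3 ≤ k) (hn : 2 * k < n) (hx4 : 4 ≤ x) (hxn : x ≤ n) :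
    deg (triangleFam n k) x = 3 * (n - 4).choose (k - 3) := by
  have hxQ : x ∉ ({1,2,3} : Finset ℕ) := by simp; omega
  unfold deg triangleFam
  rw [Finset.filter_filter]
  set Q' : Finset ℕ := {1,2,3,x} with hQ'
  have hQ'eq : Q' = insert x ({1,2,3} : Finset ℕ) := by
    ext t; simp [hQ']; tauto
  have hcardQ' : Q'.card = 4 := by
    rw [hQ'eq, Finset.card_insert_of_notMem hxQ]; decide
  have e : (Finset.powersetCard k (Finset.Icc 1 n)).filter
        (fun A => (A ∩ ({1,2,3} : Finset ℕ)).card = 2 ∧ x ∈ A)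
      = (Finset.powersetCard k (Finset.Icc 1 n)).filter
        (fun A => A ∩ Q' = {1,2,x} ∨ (A ∩ Q' = {1,3,x} ∨ A ∩ Q' = {2,3,x})) := by
    apply Finset.filter_congr
    intro A _
    constructor
    · rintro ⟨hcard, hxA⟩
      have hsplit : A ∩ Q' = (A ∩ ({1,2,3} : Finset ℕ)) ∪ {x} := by
        rw [hQ'eq, Finset.insert_eq, Finset.inter_union_distrib_left,
          Finset.inter_singleton_of_mem hxA, Finset.union_comm]
      rcases pair_sub _ Finset.inter_subset_right hcard with h | h | h
      · left; rw [hsplit, h]; ext t; simp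
      · right; left; rw [hsplit, h]; ext t; simp
      · right; right; rw [hsplit, h]; ext t; simp
    · have key : ∀ (a b : ℕ), a ∈ ({1,2,3} : Finset ℕ) → b ∈ ({1,2,3} : Finset ℕ) → a ≠ b →
          A ∩ Q' = {a, b, x} → (A ∩ ({1,2,3} : Finset ℕ)).card = 2 ∧ x ∈ A := by
        intro a b ha hb hab h
        have hxA : x ∈ A := by
          have : x ∈ A ∩ Q' := by rw [h]; simp
          exact (Finset.mem_inter.mp this).1
        have hsub : ({1,2,3} : Finset ℕ) ⊆ Q' := by
          rw [hQ'eq]; exact Finset.subset_insert _ _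
        have hAQ : A ∩ ({1,2,3} : Finset ℕ) = (A ∩ Q') ∩ ({1,2,3} : Finset ℕ) := by
          rw [Finset.inter_assoc, Finset.inter_eq_right.mpr hsub]
        have hab2 : A ∩ ({1,2,3} : Finset ℕ) = {a, b} := by
          rw [hAQ, h]
          simp only [mem_insert, mem_singleton] at ha hb
          ext t
          simp only [Finset.mem_inter, mem_insert, mem_singleton]
          constructor
          · rintro ⟨h1 | h1 | h1, h2⟩
            · exact Or.inl h1
            · exact Or.inr h1
            · subst h1; rcases h2 with h2 | h2 | h2 <;> omega
          · rintro (rfl | rfl)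
            · exact ⟨Or.inl rfl, by rcases ha with rfl | rfl | rfl <;> simp⟩
            · exact ⟨Or.inr (Or.inl rfl), by rcases hb with rfl | rfl | rfl <;> simp⟩
        rw [hab2, Finset.card_insert_of_notMem (by simpa using hab), Finset.card_singleton]
        exact ⟨rfl, hxA⟩
      rintro (h | h | h)
      · exact key 1 2 (by decide) (by decide) (by decide) h
      · exact key 1 3 (by decide) (by decide) (by decide) h
      · exact key 2 3 (by decide) (by decide) (by decide) h
  rw [e, Finset.filter_or, Finset.filter_or]
  have hQ's : Q' ⊆ Finset.Icc 1 n := by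
    intro t ht
    simp only [hQ', mem_insert, mem_singleton] at ht
    rw [Finset.mem_Icc]; omega
  have hPQ : ∀ (a b : ℕ), a ∈ ({1,2,3} : Finset ℕ) → b ∈ ({1,2,3} : Finset ℕ) →
      ({a, b, x} : Finset ℕ) ⊆ Q' := by
    intro a b ha hb t ht
    simp only [mem_insert, mem_singleton] at ha hb ht
    simp only [hQ', mem_insert, mem_singleton]
    rcases ht with rfl | rfl | rfl <;> tauto
  have hcardP : ∀ (a b : ℕ), a ∈ ({1,2,3} : Finset ℕ) → b ∈ ({1,2,3} : Finset ℕ) → a ≠ b →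
      ({a, b, x} : Finset ℕ).card = 3 := by
    intro a b ha hb hab
    simp only [mem_insert, mem_singleton] at ha hb
    rw [Finset.card_insert_of_notMem (by simp; omega), Finset.card_insert_of_notMem (by simp; omega),
      Finset.card_singleton]
  have hdisj : ∀ (P₁ P₂ : Finset ℕ), P₁ ≠ P₂ →
      Disjoint ((Finset.powersetCard k (Finset.Icc 1 n)).filter (fun A => A ∩ Q' = P₁))
        ((Finset.powersetCard k (Finset.Icc 1 n)).filter (fun A => A ∩ Q' = P₂)) := by
    intro P₁ P₂ hne
    rw [Finset.disjoint_left]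
    intro A hA hA2
    rw [Finset.mem_filter] at hA hA2
    exact hne (hA.2.symm.trans hA2.2)
  have hne12 : ({1,2,x} : Finset ℕ) ≠ {1,3,x} := by
    intro h
    have : (2 : ℕ) ∈ ({1,3,x} : Finset ℕ) := h ▸ (by simp)
    simp at this; omega
  have hne13 : ({1,2,x} : Finset ℕ) ≠ {2,3,x} := by
    intro h
    have : (1 : ℕ) ∈ ({2,3,x} : Finset ℕ) := h ▸ (by simp)
    simp at this; omega
  have hne23 : ({1,3,x} : Finset ℕ) ≠ {2,3,x} := by
    intro h
    have : (1 : ℕ) ∈ ({2,3,x} : Finset ℕ) := h ▸ (by simp)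
    simp at this; omega
  rw [Finset.card_union_of_disjoint, Finset.card_union_of_disjoint (hdisj _ _ hne23)]
  · rw [countInter _ _ _ _ (hPQ 1 2 (by decide) (by decide)) hQ's
        (by rw [hcardP 1 2 (by decide) (by decide) (by decide)]; omega),
      countInter _ _ _ _ (hPQ 1 3 (by decide) (by decide)) hQ's
        (by rw [hcardP 1 3 (by decide) (by decide) (by decide)]; omega),
      countInter _ _ _ _ (hPQ 2 3 (by decide) (by decide)) hQ's
        (by rw [hcardP 2 3 (by decide) (by decide) (by decide)]; omega),
      Nat.card_Icc, hcardQ',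
      hcardP 1 2 (by decide) (by decide) (by decide),
      hcardP 1 3 (by decide) (by decide) (by decide),
      hcardP 2 3 (by decide) (by decide) (by decide)]
    have : n + 1 - 1 = n := by omega
    rw [this]
    ring
  · rw [Finset.disjoint_left]
    intro A hA hA2
    rw [Finset.mem_filter] at hA
    rw [Finset.mem_union, Finset.mem_filter, Finset.mem_filter] at hA2
    rcases hA2 with (h | h)
    · exact hne12 (hA.2.symm.trans h.2)
    · exact hne13 (hA.2.symm.trans h.2)

theorem stmt_17 (n k : ℕ) (hk : 3 ≤ k) (hn : 2 * k < n)
    (F : Finset (Finset ℕ)) (h1 : triangleFam n k ⊂ F) (h2 : F ⊆ bigTriangleFam n k) :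
    (triangleFam n k).card - maxDeg n (triangleFam n k) = F.card - maxDeg n F ∧
    ∀ C : ℝ, 1 < C →
      (F.card : ℝ) - C * maxDeg n F
        < ((triangleFam n k).card : ℝ) - C * maxDeg n (triangleFam n k) := by
  set T := triangleFam n k with hT
  set G := F \ T with hG
  have hsub : T ⊆ F := h1.subset
  have hGne : G.Nonempty := sdiff_nonempty.mpr (fun h => h1.not_subset h)
  have hmpos : 0 < G.card := card_pos.mpr hGne
  have hcard : F.card = T.card + G.card := by
    have h := Finset.card_sdiff_add_card_eq_card hsub
    rw [← hG] at h
    omega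
  -- every member of G contains 1, 2, 3
  have hGmem : ∀ A ∈ G, A ∩ ({1,2,3} : Finset ℕ) = {1,2,3} := by
    intro A hA
    rw [hG, Finset.mem_sdiff] at hA
    obtain ⟨hAF, hAT⟩ := hA
    have hbig := h2 hAF
    rw [bigTriangleFam, Finset.mem_filter] at hbig
    have hnT : ¬ ((A ∩ ({1,2,3} : Finset ℕ)).card = 2) := by
      intro hc
      exact hAT (by rw [hT, triangleFam, Finset.mem_filter]; exact ⟨hbig.1, hc⟩)
    have hle : (A ∩ ({1,2,3} : Finset ℕ)).card ≤ 3 := by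
      have := Finset.card_le_card (@Finset.inter_subset_right ℕ _ A ({1,2,3} : Finset ℕ))
      simpa using this
    have h3 : (A ∩ ({1,2,3} : Finset ℕ)).card = 3 := by omega
    apply Finset.eq_of_subset_of_card_le Finset.inter_subset_right
    rw [h3]
    decide
  have hG1 : ∀ A ∈ G, 1 ∈ A := by
    intro A hA
    have := hGmem A hA
    have h1m : (1 : ℕ) ∈ A ∩ ({1,2,3} : Finset ℕ) := by rw [this]; decide
    exact (Finset.mem_inter.mp h1m).1
  -- deg decomposition
  have hdegF : ∀ x, deg F x = deg T x + deg G x := by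
    intro x
    unfold deg
    rw [← Finset.union_sdiff_of_subset hsub, Finset.filter_union,
      Finset.card_union_of_disjoint]
    exact Finset.disjoint_filter_filter Finset.disjoint_sdiff
  have hdeg1G : deg G 1 = G.card := by
    unfold deg
    rw [Finset.filter_true_of_mem hG1]
  have hdegGle : ∀ x, deg G x ≤ G.card := fun x => Finset.card_filter_le _ _
  -- degrees in T
  have hch1 : ∀ s : Finset ℕ, s ⊆ {1,2,3} → s.card = 2 →
      ((1 : ℕ) ∈ s ↔ s = {1,2} ∨ s = {1,3}) := by
    intro s hs hc
    rcases pair_sub s hs hc with rfl | rfl | rfl <;> decide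
  have hch2 : ∀ s : Finset ℕ, s ⊆ {1,2,3} → s.card = 2 →
      ((2 : ℕ) ∈ s ↔ s = {1,2} ∨ s = {2,3}) := by
    intro s hs hc
    rcases pair_sub s hs hc with rfl | rfl | rfl <;> decide
  have hch3 : ∀ s : Finset ℕ, s ⊆ {1,2,3} → s.card = 2 →
      ((3 : ℕ) ∈ s ↔ s = {1,3} ∨ s = {2,3}) := by
    intro s hs hc
    rcases pair_sub s hs hc with rfl | rfl | rfl <;> decide
  have hd1 : deg T 1 = 2 * (n - 3).choose (k - 2) :=
    deg_small n k hk hn 1 {1,2} {1,3} (by decide) (by decide) (by decide) (by decide)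
      (by decide) hch1
  have hd2 : deg T 2 = 2 * (n - 3).choose (k - 2) :=
    deg_small n k hk hn 2 {1,2} {2,3} (by decide) (by decide) (by decide) (by decide)
      (by decide) hch2
  have hd3 : deg T 3 = 2 * (n - 3).choose (k - 2) :=
    deg_small n k hk hn 3 {1,3} {2,3} (by decide) (by decide) (by decide) (by decide)
      (by decide) hch3
  have hmax_le : ∀ x ∈ Finset.Icc 1 n, deg T x ≤ deg T 1 := by
    intro x hx
    rw [Finset.mem_Icc] at hx
    obtain ⟨hx1, hxn⟩ := hx
    rcases Nat.lt_or_ge x 4 with hx4 | hx4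
    · interval_cases x
      · rw [hd1]
      · rw [hd2, hd1]
      · rw [hd3, hd1]
    · rw [deg_large n k x hk hn hx4 hxn, hd1]
      exact choose_ineq n k hk hn
  have h1mem : (1 : ℕ) ∈ Finset.Icc 1 n := by
    rw [Finset.mem_Icc]; omega
  have hmaxT : maxDeg n T = deg T 1 :=
    le_antisymm (Finset.sup_le hmax_le) (Finset.le_sup h1mem)
  have hmaxF : maxDeg n F = deg T 1 + G.card := by
    apply le_antisymm
    · apply Finset.sup_le
      intro x hx
      rw [hdegF x]
      exact add_le_add (hmax_le x hx) (hdegGle x)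
    · have : deg F 1 = deg T 1 + G.card := by rw [hdegF 1, hdeg1G]
      calc deg T 1 + G.card = deg F 1 := this.symm
      _ ≤ maxDeg n F := Finset.le_sup h1mem
  constructor
  · rw [hcard, hmaxF, hmaxT]
    omega
  · intro C hC
    rw [hcard, hmaxF, hmaxT]
    have hm1 : (1 : ℝ) ≤ (G.card : ℝ) := by exact_mod_cast hmpos
    push_cast
    nlinarith [hm1, hC]
end

section
/- If F ⊆ ([n] choose k) is intersecting with n > 2k, x ∈ [n], and there exists F₀ ∈ F with x ∉ F₀, then the degree of x in F is at most C(n-1, k-1) - C(n-k-1, k-1). -/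
open Finset

theorem stmt_18 (n k : ℕ) (hn : 2 * k < n) (hk : 1 ≤ k)
    (F : Finset (Finset ℕ)) (hF : F ⊆ Finset.powersetCard k (Finset.Icc 1 n))
    (hint : ∀ A ∈ F, ∀ B ∈ F, (A ∩ B).Nonempty)
    (x : ℕ) (hx : x ∈ Finset.Icc 1 n) (F₀ : Finset ℕ) (hF₀ : F₀ ∈ F) (hxF₀ : x ∉ F₀) :
    (F.filter (fun A => x ∈ A)).card ≤ (n - 1).choose (k - 1) - (n - k - 1).choose (k - 1) := by
  have hF₀mem := hF hF₀
  rw [Finset.mem_powersetCard] at hF₀mem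
  obtain ⟨hF₀sub, hF₀card⟩ := hF₀mem
  set T := (Finset.Icc 1 n).erase x with hT
  have hTcard : T.card = n - 1 := by
    rw [Finset.card_erase_of_mem hx, Nat.card_Icc]; omega
  have hF₀T : F₀ ⊆ T := fun y hy => Finset.mem_erase.mpr ⟨fun h => hxF₀ (h ▸ hy), hF₀sub hy⟩
  have key : (F.filter (fun A => x ∈ A)).card ≤
      (Finset.powersetCard (k-1) T \ Finset.powersetCard (k-1) (T \ F₀)).card := by
    apply Finset.card_le_card_of_injOn (fun A => A.erase x)
    · intro A hA
      rw [Finset.mem_coe, Finset.mem_filter] at hA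
      obtain ⟨hAF, hxA⟩ := hA
      have hAmem := hF hAF
      rw [Finset.mem_powersetCard] at hAmem
      rw [Finset.mem_coe, Finset.mem_sdiff, Finset.mem_powersetCard, Finset.mem_powersetCard]
      refine ⟨⟨fun y hy => ?_, ?_⟩, ?_⟩
      · rw [Finset.mem_erase] at hy ⊢
        exact ⟨hy.1, hAmem.1 hy.2⟩
      · rw [Finset.card_erase_of_mem hxA, hAmem.2]
      · rintro ⟨hsub, -⟩
        obtain ⟨y, hy⟩ := hint A hAF F₀ hF₀
        have hyA : y ∈ A := (Finset.mem_inter.mp hy).1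
        have hyF₀ : y ∈ F₀ := (Finset.mem_inter.mp hy).2
        have hyx : y ≠ x := fun h => hxF₀ (h ▸ hyF₀)
        have := hsub (Finset.mem_erase.mpr ⟨hyx, hyA⟩)
        exact (Finset.mem_sdiff.mp this).2 hyF₀
    · intro A hA B hB hAB
      rw [Finset.mem_coe, Finset.mem_filter] at hA hB
      have := congrArg (insert x) hAB
      rwa [Finset.insert_erase hA.2, Finset.insert_erase hB.2] at this
  refine key.trans ?_
  rw [Finset.card_sdiff_of_subset (Finset.powersetCard_mono Finset.sdiff_subset),
      Finset.card_powersetCard, Finset.card_powersetCard, hTcard,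
      Finset.card_sdiff_of_subset hF₀T, hTcard, hF₀card]
  have h2 : n - 1 - k = n - k - 1 := by omega
  rw [h2]
end
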